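/- arXiv:2402.10442 — 3 statements merged into one kernel-verified Lean document; each statement's English description precedes it below -/
import Mathlib

section
/- For real x with |x| < π/2, tan x = ∑_{m=1}^∞ (-1)^{m+1} (2^{2m} - 1) 2^{2m} B_{2m} / (2m)! · x^{2m-1}, with the series converging. -/
open PowerSeries Complex Nat

noncomputable def tanCoeff : ℕ → ℝ := fun n =>
  if n % 2 = 1 then
    (-1) ^ ((n + 1) / 2 + 1) *
      ((2 ^ (n + 1) - 1) * 2 ^ (n + 1) * (bernoulli (n + 1) : ℝ) / (Nat.factorial (n + 1)))
  else 0

noncomputable def cosCoeff : ℕ → ℝ := fun n =>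
  if n % 2 = 0 then (-1) ^ (n / 2) / (Nat.factorial n) else 0

noncomputable def sinCoeff : ℕ → ℝ := fun n =>
  if n % 2 = 1 then (-1) ^ (n / 2) / (Nat.factorial n) else 0

noncomputable def EIc : PowerSeries ℂ := rescale I (exp ℂ)
noncomputable def EIc' : PowerSeries ℂ := rescale (-I) (exp ℂ)
noncomputable def E2c : PowerSeries ℂ := rescale (2 * I) (exp ℂ)
noncomputable def E2c' : PowerSeries ℂ := rescale (-(2 * I)) (exp ℂ)
noncomputable def B2c : PowerSeries ℂ := rescale (2 * I) (bernoulliPowerSeries ℂ)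
noncomputable def cosS : PowerSeries ℂ := PowerSeries.mk fun n => (cosCoeff n : ℂ)
noncomputable def sinS : PowerSeries ℂ := PowerSeries.mk fun n => (sinCoeff n : ℂ)
noncomputable def tanS : PowerSeries ℂ := PowerSeries.mk fun n => (tanCoeff n : ℂ)
noncomputable def DS : PowerSeries ℂ := C I * X + B2c

lemma amap_fact (n : ℕ) : (algebraMap ℚ ℂ) (1 / (n ! : ℚ)) = 1 / (n ! : ℂ) := by
  rw [eq_ratCast]; push_cast; ring

lemma rescale_C' (a b : ℂ) : rescale b (C a) = C a := by
  ext n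
  simp only [coeff_rescale, coeff_C]
  rcases n with _ | n <;> simp

lemma EIc_add : EIc + EIc' = 2 * cosS := by
  ext n
  simp only [EIc, EIc', cosS, map_add, coeff_rescale, coeff_exp, coeff_mk, amap_fact, cosCoeff]
  rw [(map_ofNat (C (R := ℂ)) 2).symm, coeff_C_mul, coeff_mk]
  rcases Nat.even_or_odd n with ⟨k, hk⟩ | ⟨k, hk⟩
  · have h2 : n = 2 * k := by omega
    subst h2
    have hI : (I : ℂ) ^ (2 * k) = (-1) ^ k := by rw [pow_mul, I_sq]
    have hI' : (-I : ℂ) ^ (2 * k) = (-1) ^ k := by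
      rw [pow_mul]; simp [neg_sq, I_sq]
    rw [hI, hI', if_pos (by omega : (2 * k) % 2 = 0),
      (by omega : 2 * k / 2 = k)]
    push_cast
    ring
  · subst hk
    have hI' : (-I : ℂ) ^ (2 * k + 1) = -(I ^ (2 * k + 1)) := by
      rw [neg_pow, Odd.neg_one_pow ⟨k, by ring⟩]; ring
    rw [hI', if_neg (by omega : ¬(2 * k + 1) % 2 = 0)]
    push_cast
    ring

lemma EIc_sub : EIc - EIc' = 2 * C I * sinS := by
  ext n
  simp only [EIc, EIc', sinS, map_sub, coeff_rescale, coeff_exp, coeff_mk, amap_fact, sinCoeff]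
  have h2C : (2 : PowerSeries ℂ) * C I = C (2 * I) := by
    rw [map_mul, map_ofNat]
  rw [h2C, coeff_C_mul, coeff_mk]
  rcases Nat.even_or_odd n with ⟨k, hk⟩ | ⟨k, hk⟩
  · have h2 : n = 2 * k := by omega
    subst h2
    have hI : (I : ℂ) ^ (2 * k) = (-1) ^ k := by rw [pow_mul, I_sq]
    have hI' : (-I : ℂ) ^ (2 * k) = (-1) ^ k := by
      rw [pow_mul]; simp [neg_sq, I_sq]
    rw [hI, hI', if_neg (by omega : ¬(2 * k) % 2 = 1)]
    push_cast
    ring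
  · subst hk
    have hI : (I : ℂ) ^ (2 * k + 1) = (-1) ^ k * I := by
      rw [pow_succ, pow_mul, I_sq]
    have hI' : (-I : ℂ) ^ (2 * k + 1) = -((-1) ^ k * I) := by
      rw [neg_pow, Odd.neg_one_pow ⟨k, by ring⟩, hI]; ring
    rw [hI, hI', if_pos (by omega : (2 * k + 1) % 2 = 1),
      (by omega : (2 * k + 1) / 2 = k)]
    push_cast
    ring

lemma EIc_mul_EIc' : EIc * EIc' = 1 := by
  rw [EIc, EIc', PowerSeries.exp_mul_exp_eq_exp_add, add_neg_cancel, rescale_zero]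
  simp

lemma EIc_sq : EIc * EIc = E2c := by
  rw [EIc, E2c, PowerSeries.exp_mul_exp_eq_exp_add]
  norm_num [two_mul]

lemma EIc'_sq : EIc' * EIc' = E2c' := by
  rw [EIc', E2c', PowerSeries.exp_mul_exp_eq_exp_add]
  norm_num [two_mul]

lemma hB2 : B2c * (E2c - 1) = 2 * C I * X := by
  have h := congrArg (rescale (2 * I)) (bernoulliPowerSeries_mul_exp_sub_one ℂ)
  rw [map_mul, map_sub, map_one, rescale_X] at h
  rw [B2c, E2c, h, map_mul, map_ofNat]

lemma EIc_ne : EIc ≠ 0 := by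
  intro h
  have := congrArg (constantCoeff) h
  rw [EIc, ← coeff_zero_eq_constantCoeff_apply, coeff_rescale, coeff_zero_eq_constantCoeff_apply,
    constantCoeff_exp] at this
  simp at this

lemma sinS_ne : sinS ≠ 0 := by
  intro h
  have := congrArg (coeff 1) h
  rw [sinS, coeff_mk] at this
  simp [sinCoeff] at this

lemma two_ne : (2 : PowerSeries ℂ) ≠ 0 := by
  intro h
  have := congrArg (constantCoeff) h
  rw [map_ofNat, map_zero] at this
  norm_num at this

lemma CI_ne : C I ≠ 0 := by
  intro h
  have := congrArg (constantCoeff) h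
  rw [constantCoeff_C, map_zero] at this
  exact I_ne_zero this

lemma hDsin : DS * sinS = X * cosS := by
  have key : DS * (EIc - EIc') * EIc = C I * X * (EIc + EIc') * EIc := by
    have h1 : DS * (EIc - EIc') * EIc = DS * (EIc * EIc) - DS * (EIc * EIc') := by ring
    have h2 : C I * X * (EIc + EIc') * EIc
        = C I * X * (EIc * EIc) + C I * X * (EIc * EIc') := by ring
    rw [h1, h2, EIc_sq, EIc_mul_EIc', DS]
    linear_combination hB2
  have h3 := mul_right_cancel₀ EIc_ne key
  rw [EIc_sub, EIc_add] at h3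
  have h4 : (2 * C I) * (DS * sinS) = (2 * C I) * (X * cosS) := by
    linear_combination h3
  exact mul_left_cancel₀ (mul_ne_zero two_ne CI_ne) h4

lemma rescale2_EIc : rescale 2 EIc = EIc * EIc := by
  rw [EIc_sq, E2c, EIc, rescale_rescale]
  congr 1
  ring

lemma rescale2_EIc' : rescale 2 EIc' = EIc' * EIc' := by
  rw [EIc'_sq, E2c', EIc', rescale_rescale]
  congr 1
  ring

lemma sin2 : rescale 2 sinS = 2 * (sinS * cosS) := by
  have h := congrArg (rescale 2) EIc_sub
  rw [map_sub, map_mul, map_mul, map_ofNat, rescale_C', rescale2_EIc, rescale2_EIc'] at h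
  have h2 : EIc * EIc - EIc' * EIc' = (EIc - EIc') * (EIc + EIc') := by ring
  rw [h2, EIc_sub, EIc_add] at h
  have h3 : (2 * C I) * (2 * (sinS * cosS)) = (2 * C I) * (rescale 2 sinS) := by
    linear_combination h
  exact (mul_left_cancel₀ (mul_ne_zero two_ne CI_ne) h3).symm

lemma cos2 : rescale 2 cosS = 2 * (cosS * cosS) - 1 := by
  have h := congrArg (rescale 2) EIc_add
  rw [map_add, map_mul, map_ofNat, rescale2_EIc, rescale2_EIc'] at h
  have h2 : EIc * EIc + EIc' * EIc'
      = (EIc + EIc') * (EIc + EIc') - 2 * (EIc * EIc') := by ring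
  rw [h2, EIc_add, EIc_mul_EIc'] at h
  have h3 : (2 : PowerSeries ℂ) * (2 * (cosS * cosS) - 1) = 2 * rescale 2 cosS := by
    linear_combination h
  exact (mul_left_cancel₀ two_ne h3).symm

lemma four_ne : (4 : PowerSeries ℂ) ≠ 0 := by
  intro h
  have := congrArg (constantCoeff) h
  rw [map_ofNat, map_zero] at this
  norm_num at this

lemma hCI2 : C I * C I = -1 := by
  rw [← map_mul, I_mul_I, map_neg, map_one]

lemma pyth : sinS * sinS + cosS * cosS = 1 := by
  have h4 : (4 : PowerSeries ℂ) * (sinS * sinS + cosS * cosS) = 4 * 1 := by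
    linear_combination (4 : PowerSeries ℂ) * EIc_mul_EIc'
      - (EIc + EIc' + 2 * cosS) * EIc_add + (EIc - EIc' + 2 * C I * sinS) * EIc_sub
      + 4 * sinS * sinS * hCI2
  exact mul_left_cancel₀ four_ne h4

lemma hR2Dsin : rescale 2 DS * (2 * (sinS * cosS)) = 2 * X * (2 * (cosS * cosS) - 1) := by
  have h := congrArg (rescale 2) hDsin
  rw [map_mul, map_mul, rescale_X, sin2, cos2, map_ofNat] at h
  linear_combination h

lemma hF5 : (DS - rescale 2 DS) * cosS = X * sinS := by
  have h : ((DS - rescale 2 DS) * cosS) * (2 * sinS) = (X * sinS) * (2 * sinS) := by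
    linear_combination 2 * cosS * hDsin - hR2Dsin - 2 * X * pyth
  exact mul_right_cancel₀ (mul_ne_zero two_ne sinS_ne) h

lemma hXtan : X * tanS = DS - rescale 2 DS := by
  ext n
  rw [map_sub, coeff_rescale]
  simp only [DS, map_add, coeff_C_mul, coeff_X, B2c, coeff_rescale, bernoulliPowerSeries,
    coeff_mk, eq_ratCast, tanS]
  rcases n with _ | n
  · rw [coeff_zero_X_mul]
    norm_num
  rw [coeff_succ_X_mul, coeff_mk]
  rcases n with _ | m
  · simp [tanCoeff, bernoulli_one]
    ring
  · -- n = m + 2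
    rw [if_neg (by omega : ¬ m + 2 = 1)]
    rcases Nat.even_or_odd m with ⟨j, hj⟩ | ⟨j, hj⟩
    · have hm : m = 2 * j := by omega
      subst hm
      have h1 : tanCoeff (2 * j + 1) = (-1) ^ (j + 2) *
          ((2 ^ (2 * j + 2) - 1) * 2 ^ (2 * j + 2) * (bernoulli (2 * j + 2) : ℝ)
            / (Nat.factorial (2 * j + 2))) := by
        rw [tanCoeff]
        rw [if_pos (by omega : (2 * j + 1) % 2 = 1)]
        norm_num
        left
        rw [(by omega : (2 * j + 1 + 1) / 2 + 1 = j + 2)]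
      have hI : ((2 : ℂ) * I) ^ (2 * j + 2) = 2 ^ (2 * j + 2) * ((-1) ^ (j + 1)) := by
        rw [mul_pow]
        congr 1
        rw [(by ring : 2 * j + 2 = 2 * (j + 1)), pow_mul, I_sq]
      rw [h1, hI]
      push_cast
      ring
    · have hm : m = 2 * j + 1 := by omega
      subst hm
      have h1 : tanCoeff (2 * j + 1 + 1) = 0 := by
        rw [tanCoeff, if_neg (by omega : ¬ (2 * j + 1 + 1) % 2 = 1)]
      have h2 : bernoulli (2 * j + 1 + 2) = 0 := by
        rw [bernoulli_eq_bernoulli'_of_ne_one (by omega),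
          bernoulli'_eq_zero_of_odd ⟨j + 1, by ring⟩ (by omega)]
      rw [h1, h2]
      push_cast
      ring

lemma X_ne : (X : PowerSeries ℂ) ≠ 0 := by
  intro h
  have := congrArg (coeff 1) h
  rw [coeff_X, if_pos rfl, map_zero] at this
  exact one_ne_zero this

lemma hF6 : tanS * cosS = sinS := by
  have h : X * (tanS * cosS) = X * sinS := by
    calc X * (tanS * cosS) = (X * tanS) * cosS := by ring
    _ = (DS - rescale 2 DS) * cosS := by rw [hXtan]
    _ = X * sinS := hF5
  exact mul_left_cancel₀ X_ne h

lemma coeff_identity (n : ℕ) :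
    (∑ p ∈ Finset.HasAntidiagonal.antidiagonal n, tanCoeff p.1 * cosCoeff p.2) = sinCoeff n := by
  have h := congrArg (coeff n) hF6
  rw [PowerSeries.coeff_mul] at h
  simp only [tanS, cosS, sinS, coeff_mk] at h
  have h2 : ((∑ p ∈ Finset.HasAntidiagonal.antidiagonal n, tanCoeff p.1 * cosCoeff p.2 : ℝ) : ℂ)
      = ((sinCoeff n : ℝ) : ℂ) := by
    push_cast
    exact h
  exact_mod_cast h2

open Real in
lemma tanCoeff_eval (m : ℕ) :
    tanCoeff (2 * m + 1) = (-1) ^ (m + 2) *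
      ((2 ^ (2 * m + 2) - 1) * 2 ^ (2 * m + 2) * (bernoulli (2 * m + 2) : ℝ)
        / (Nat.factorial (2 * m + 2))) := by
  rw [tanCoeff, if_pos (by omega : (2 * m + 1) % 2 = 1)]
  norm_num
  left
  rw [(by omega : (2 * m + 1 + 1) / 2 + 1 = m + 2)]

open Real in
lemma tanCoeff_bound (m : ℕ) :
    |tanCoeff (2 * m + 1)| ≤ π ^ 2 / 3 * (2 / π) ^ (2 * m + 2) := by
  have hπ : (0 : ℝ) < π := pi_pos
  have hz := hasSum_zeta_nat (k := m + 1) (by omega)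
  set A : ℝ := (-1 : ℝ) ^ (m + 1 + 1) * (2 : ℝ) ^ (2 * (m + 1) - 1) * π ^ (2 * (m + 1)) *
      (bernoulli (2 * (m + 1)) : ℝ) / (2 * (m + 1))! with hA
  have hA0 : 0 ≤ A := hz.nonneg (fun n => by positivity)
  have hA6 : A ≤ π ^ 2 / 6 := by
    refine hasSum_le (fun n => ?_) hz hasSum_zeta_two
    rcases Nat.eq_zero_or_pos n with rfl | hn
    · simp
    · apply one_div_le_one_div_of_le
      · positivity
      · exact pow_le_pow_right₀ (by exact_mod_cast hn) (by omega)
  have ht : tanCoeff (2 * m + 1) = (2 ^ (2 * m + 2) - 1) * 2 * A / π ^ (2 * m + 2) := by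
    rw [tanCoeff_eval, hA]
    rw [(by omega : 2 * (m + 1) - 1 = 2 * m + 1), (by omega : 2 * (m + 1) = 2 * m + 2),
      (by omega : m + 1 + 1 = m + 2)]
    have hfac : ((2 * m + 2)! : ℝ) ≠ 0 := by
      exact_mod_cast (Nat.factorial_ne_zero _)
    field_simp
    ring
  have h21 : (1 : ℝ) ≤ 2 ^ (2 * m + 2) := one_le_pow₀ one_le_two
  have ht0 : 0 ≤ tanCoeff (2 * m + 1) := by
    rw [ht]
    apply div_nonneg _ (by positivity)
    apply mul_nonneg (mul_nonneg (by linarith) (by norm_num)) hA0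
  rw [_root_.abs_of_nonneg ht0, ht, div_pow]
  have hrw : π ^ 2 / 3 * ((2:ℝ) ^ (2 * m + 2) / π ^ (2 * m + 2))
      = (π ^ 2 / 3 * 2 ^ (2 * m + 2)) / π ^ (2 * m + 2) := by ring
  rw [hrw, div_le_div_iff_of_pos_right (by positivity)]
  nlinarith [hA0, hA6, h21]

lemma tanCoeff_even {n : ℕ} (hn : n % 2 = 0) : tanCoeff n = 0 := by
  rw [tanCoeff, if_neg (by omega)]

open Real in
lemma summable_tanCoeff {x : ℝ} (hx : |x| < π / 2) :
    Summable (fun n => |tanCoeff n * x ^ n|) := by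
  have hπ : (0 : ℝ) < π := pi_pos
  set r : ℝ := 2 * |x| / π with hr
  have hr0 : 0 ≤ r := by positivity
  have hr1 : r < 1 := by
    rw [hr, div_lt_one hπ]
    linarith [hx]
  have hgeom : Summable (fun m : ℕ => (2 * π / 3) * r ^ m) :=
    (summable_geometric_of_lt_one hr0 hr1).mul_left _
  have hterm : ∀ m : ℕ, |tanCoeff (2 * m + 1) * x ^ (2 * m + 1)| ≤ (2 * π / 3) * r ^ m := by
    intro m
    rw [abs_mul, _root_.abs_pow]
    have h1 : |tanCoeff (2 * m + 1)| * |x| ^ (2 * m + 1)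
        ≤ (π ^ 2 / 3 * (2 / π) ^ (2 * m + 2)) * |x| ^ (2 * m + 1) :=
      mul_le_mul_of_nonneg_right (tanCoeff_bound m) (by positivity)
    refine h1.trans ?_
    have h2 : π ^ 2 / 3 * (2 / π) ^ (2 * m + 2) * |x| ^ (2 * m + 1)
        = (2 * π / 3) * r ^ (2 * m + 1) := by
      rw [hr, div_pow, div_pow, mul_pow]
      field_simp
      ring
    rw [h2]
    apply mul_le_mul_of_nonneg_left _ (by positivity)
    exact pow_le_pow_of_le_one hr0 hr1.le (by omega)
  have hodd : Summable (fun m : ℕ => |tanCoeff (2 * m + 1) * x ^ (2 * m + 1)|) :=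
    hgeom.of_nonneg_of_le (fun m => abs_nonneg _) hterm
  have hinj : Function.Injective (fun m : ℕ => 2 * m + 1) := fun a b h => by
    simp only at h; omega
  refine (Function.Injective.summable_iff hinj ?_).mp hodd
  intro n hn
  have hne : n % 2 = 0 := by
    rcases Nat.even_or_odd n with h | h
    · exact Nat.even_iff.mp h
    · obtain ⟨k, hk⟩ := h
      exact absurd ⟨k, show 2 * k + 1 = n by omega⟩ hn
  rw [tanCoeff_even hne, zero_mul, abs_zero]

open Real in
lemma hasSum_cosCoeff (x : ℝ) : HasSum (fun n => cosCoeff n * x ^ n) (Real.cos x) := by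
  have hinj : Function.Injective (fun m : ℕ => 2 * m) := fun a b h => by
    simp only at h; omega
  refine (Function.Injective.hasSum_iff hinj ?_).mp ?_
  · intro n hn
    have hne : n % 2 = 1 := by
      rcases Nat.even_or_odd n with h | h
      · obtain ⟨k, hk⟩ := h
        exact absurd ⟨k, show 2 * k = n by omega⟩ hn
      · exact Nat.odd_iff.mp h
    rw [cosCoeff, if_neg (by omega), zero_mul]
  · refine (Real.hasSum_cos x).congr_fun fun m => ?_
    show cosCoeff (2 * m) * x ^ (2 * m) = _
    rw [cosCoeff, if_pos (by omega : (2 * m) % 2 = 0), (by omega : 2 * m / 2 = m)]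
    ring

open Real in
lemma hasSum_sinCoeff (x : ℝ) : HasSum (fun n => sinCoeff n * x ^ n) (Real.sin x) := by
  have hinj : Function.Injective (fun m : ℕ => 2 * m + 1) := fun a b h => by
    simp only at h; omega
  refine (Function.Injective.hasSum_iff hinj ?_).mp ?_
  · intro n hn
    have hne : n % 2 = 0 := by
      rcases Nat.even_or_odd n with h | h
      · exact Nat.even_iff.mp h
      · obtain ⟨k, hk⟩ := h
        exact absurd ⟨k, show 2 * k + 1 = n by omega⟩ hn
    rw [sinCoeff, if_neg (by omega), zero_mul]
  · refine (Real.hasSum_sin x).congr_fun fun m => ?_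
    show sinCoeff (2 * m + 1) * x ^ (2 * m + 1) = _
    rw [sinCoeff, if_pos (by omega : (2 * m + 1) % 2 = 1), (by omega : (2 * m + 1) / 2 = m)]
    ring

theorem tan_series (x : ℝ) (hx : |x| < Real.pi / 2) :
    HasSum (fun m : ℕ =>
        (-1) ^ (m + 1 + 1) * ((2 ^ (2 * (m + 1)) - 1) * 2 ^ (2 * (m + 1)) *
          (bernoulli (2 * (m + 1)) : ℝ) / (Nat.factorial (2 * (m + 1)))) *
          x ^ (2 * (m + 1) - 1))
      (Real.tan x) := by
  have hf : Summable fun n => ‖tanCoeff n * x ^ n‖ := by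
    simpa only [Real.norm_eq_abs] using summable_tanCoeff hx
  have hg : Summable fun n => ‖cosCoeff n * x ^ n‖ := by
    refine Summable.of_nonneg_of_le (fun n => norm_nonneg _) (fun n => ?_)
      (Real.summable_pow_div_factorial |x|)
    rw [Real.norm_eq_abs, abs_mul, _root_.abs_pow, div_eq_mul_one_div,
      mul_comm (|x| ^ n)]
    apply mul_le_mul_of_nonneg_right _ (by positivity)
    rw [cosCoeff]
    split
    · rw [abs_div, _root_.abs_pow, abs_neg, abs_one, one_pow, Nat.abs_cast]
    · simp
  have hsum : HasSum (fun n => tanCoeff n * x ^ n) (∑' n, tanCoeff n * x ^ n) :=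
    hf.of_norm.hasSum
  have hcos : Real.cos x ≠ 0 := by
    have := abs_lt.mp hx
    exact ne_of_gt (Real.cos_pos_of_mem_Ioo ⟨this.1, this.2⟩)
  have key : (∑' n, tanCoeff n * x ^ n) * Real.cos x = Real.sin x := by
    rw [← (hasSum_cosCoeff x).tsum_eq,
      tsum_mul_tsum_eq_tsum_sum_antidiagonal_of_summable_norm hf hg,
      ← (hasSum_sinCoeff x).tsum_eq]
    refine tsum_congr fun n => ?_
    calc ∑ p ∈ Finset.HasAntidiagonal.antidiagonal n, tanCoeff p.1 * x ^ p.1 * (cosCoeff p.2 * x ^ p.2)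
        = ∑ p ∈ Finset.HasAntidiagonal.antidiagonal n, tanCoeff p.1 * cosCoeff p.2 * x ^ n := by
          refine Finset.sum_congr rfl fun p hp => ?_
          rw [Finset.HasAntidiagonal.mem_antidiagonal] at hp
          rw [← hp, pow_add]
          ring
      _ = sinCoeff n * x ^ n := by rw [← Finset.sum_mul, coeff_identity]
  have htan : (∑' n, tanCoeff n * x ^ n) = Real.tan x := by
    rw [Real.tan_eq_sin_div_cos, eq_div_iff hcos, key]
  rw [htan] at hsum
  have hinj : Function.Injective (fun m : ℕ => 2 * m + 1) := fun a b h => by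
    simp only at h; omega
  have hzero : ∀ n ∉ Set.range (fun m : ℕ => 2 * m + 1), tanCoeff n * x ^ n = 0 := by
    intro n hn
    have hne : n % 2 = 0 := by
      rcases Nat.even_or_odd n with h | h
      · exact Nat.even_iff.mp h
      · obtain ⟨k, hk⟩ := h
        exact absurd ⟨k, show 2 * k + 1 = n by omega⟩ hn
    rw [tanCoeff_even hne, zero_mul]
  have h2 := (Function.Injective.hasSum_iff hinj hzero).mpr hsum
  refine h2.congr_fun fun m => ?_
  show _ = tanCoeff (2 * m + 1) * x ^ (2 * m + 1)
  rw [tanCoeff_eval, (by omega : 2 * (m + 1) = 2 * m + 2), (by omega : 2 * m + 2 - 1 = 2 * m + 1),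
    (by omega : m + 1 + 1 = m + 2)]
end

section
/- The alternating series ∑_{n=1}^∞ (-1)^{n+1} (log n)/n converges to (1/2) log² 2 - γ log 2, where γ is the Euler–Mascheroni constant. -/
open Filter Finset Real

lemma aux_integral_log_div (a b : ℝ) (ha : 0 < a) (hab : a ≤ b) :
    ∫ x in a..b, Real.log x / x = Real.log b ^ 2 / 2 - Real.log a ^ 2 / 2 := by
  have hd : ∀ x ∈ Set.uIcc a b, HasDerivAt (fun y => Real.log y ^ 2 / 2) (Real.log x / x) x := by
    intro x hx
    rw [Set.uIcc_of_le hab] at hx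
    have hx0 : x ≠ 0 := by nlinarith [hx.1]
    have h := ((Real.hasDerivAt_log hx0).fun_pow 2).div_const 2
    refine h.congr_deriv ?_
    field_simp
    ring
  rw [intervalIntegral.integral_eq_sub_of_hasDerivAt hd ?_]
  apply ContinuousOn.intervalIntegrable
  intro x hx
  rw [Set.uIcc_of_le hab] at hx
  have hx0 : x ≠ 0 := by nlinarith [hx.1]
  exact ((Real.continuousAt_log hx0).div continuousAt_id hx0).continuousWithinAt

lemma aux_tendsto_of_even_odd {u : ℕ → ℝ} {L : ℝ}
    (he : Tendsto (fun N => u (2 * N)) atTop (nhds L))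
    (ho : Tendsto (fun N => u (2 * N + 1)) atTop (nhds L)) :
    Tendsto u atTop (nhds L) := by
  rw [Metric.tendsto_atTop] at *
  intro ε hε
  obtain ⟨N1, h1⟩ := he ε hε
  obtain ⟨N2, h2⟩ := ho ε hε
  refine ⟨2 * N1 + 2 * N2 + 1, fun n hn => ?_⟩
  rcases Nat.even_or_odd n with ⟨k, hk⟩ | ⟨k, hk⟩
  · have hk' : n = 2 * k := by omega
    rw [hk']; exact h1 k (by omega)
  · have hk' : n = 2 * k + 1 := by omega
    rw [hk']; exact h2 k (by omega)

lemma aux_key_identity (N : ℕ) :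
    ∑ n ∈ Finset.Icc 1 (2 * N), (-1 : ℝ) ^ (n + 1) * Real.log n / n =
      (∑ n ∈ Finset.Icc (N + 1) (2 * N), Real.log n / n)
        - Real.log 2 * ∑ n ∈ Finset.Icc 1 N, ((n : ℝ))⁻¹ := by
  induction N with
  | zero => simp
  | succ N ih =>
    have h2 : 2 * (N + 1) = (2 * N + 1) + 1 := by ring
    rw [h2, Finset.sum_Icc_succ_top (by omega), Finset.sum_Icc_succ_top (by omega), ih,
      Finset.sum_Icc_succ_top (a := 1) (b := N) (by omega)]
    have e1 : ∑ n ∈ Finset.Icc (N + 1) (2 * N + 1 + 1), Real.log n / n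
        = (∑ n ∈ Finset.Icc (N + 1) (2 * N), Real.log n / n)
          + Real.log (2 * (N : ℝ) + 1) / (2 * (N : ℝ) + 1)
          + Real.log (2 * (N : ℝ) + 2) / (2 * (N : ℝ) + 2) := by
      rw [Finset.sum_Icc_succ_top (by omega), Finset.sum_Icc_succ_top (by omega)]
      push_cast
      rw [show 2 * (N : ℝ) + 1 + 1 = 2 * (N : ℝ) + 2 by ring]
    have e2 : ∑ n ∈ Finset.Icc (N + 1) (2 * N + 1 + 1), Real.log n / n
        = Real.log ((N : ℝ) + 1) / ((N : ℝ) + 1)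
          + ∑ n ∈ Finset.Icc (N + 1 + 1) (2 * N + 1 + 1), Real.log n / n := by
      rw [← Finset.Ioc_insert_left (by omega : N + 1 ≤ 2 * N + 1 + 1),
        Finset.sum_insert (by simp), Finset.Icc_add_one_left_eq_Ioc]
      push_cast
      ring
    have hsplit : ∑ n ∈ Finset.Icc (N + 1 + 1) (2 * N + 1 + 1), Real.log n / n
        = (∑ n ∈ Finset.Icc (N + 1) (2 * N), Real.log n / n)
          + Real.log (2 * (N : ℝ) + 1) / (2 * (N : ℝ) + 1)
          + Real.log (2 * (N : ℝ) + 2) / (2 * (N : ℝ) + 2)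
          - Real.log ((N : ℝ) + 1) / ((N : ℝ) + 1) := by linarith
    have hlog : Real.log (2 * (N : ℝ) + 2) = Real.log 2 + Real.log ((N : ℝ) + 1) := by
      rw [show (2 * (N : ℝ) + 2) = 2 * ((N : ℝ) + 1) by ring,
        Real.log_mul (by norm_num) (by positivity)]
    have hN1 : ((N : ℝ) + 1) ≠ 0 := by positivity
    have hN2 : (2 * (N : ℝ) + 1) ≠ 0 := by positivity
    have hN3 : (2 * (N : ℝ) + 2) ≠ 0 := by positivity
    have hpow1 : (-1 : ℝ) ^ (2 * N + 1 + 1) = 1 := by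
      rw [show 2 * N + 1 + 1 = 2 * (N + 1) by ring, pow_mul]; norm_num
    have hpow2 : (-1 : ℝ) ^ (2 * N + 1 + 1 + 1) = -1 := by
      rw [pow_succ, hpow1]; ring
    rw [hpow1, hpow2, hsplit]
    push_cast
    rw [hlog]
    rw [show ((2 : ℝ) * N + 1 + 1) = 2 * (N : ℝ) + 2 by ring]
    rw [hlog]
    field_simp
    ring

lemma aux_logdiv_tendsto_zero : Tendsto (fun x : ℝ => Real.log x / x) atTop (nhds 0) := by
  simpa using Real.isLittleO_log_id_atTop.tendsto_div_nhds_zero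

lemma aux_middle :
    Tendsto (fun N : ℕ =>
        (∑ n ∈ Finset.Icc (N + 1) (2 * N), Real.log n / n) - Real.log 2 * Real.log N)
      atTop (nhds (Real.log 2 ^ 2 / 2)) := by
  have hlow : Tendsto (fun N : ℕ =>
      Real.log 2 ^ 2 / 2 - (Real.log N / N - Real.log ((N : ℝ) + N) / ((N : ℝ) + N)))
      atTop (nhds (Real.log 2 ^ 2 / 2)) := by
    have h1 : Tendsto (fun N : ℕ => Real.log N / (N : ℝ)) atTop (nhds 0) :=
      aux_logdiv_tendsto_zero.comp tendsto_natCast_atTop_atTop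
    have h2 : Tendsto (fun N : ℕ => Real.log ((N : ℝ) + N) / ((N : ℝ) + N)) atTop (nhds 0) := by
      apply aux_logdiv_tendsto_zero.comp
      apply tendsto_atTop_mono (fun N : ℕ => le_add_of_nonneg_right (Nat.cast_nonneg N))
      exact tendsto_natCast_atTop_atTop
    simpa using tendsto_const_nhds.sub (h1.sub h2)
  apply tendsto_of_tendsto_of_tendsto_of_le_of_le' hlow tendsto_const_nhds
  all_goals {
    filter_upwards [eventually_ge_atTop 3] with N hN
    have hN0 : (0 : ℝ) < N := by positivity
    have hNe : Real.exp 1 ≤ (N : ℝ) := by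
      have := Real.exp_one_lt_d9
      have h3 : (3 : ℝ) ≤ N := by exact_mod_cast hN
      linarith
    have hanti : AntitoneOn (fun x : ℝ => Real.log x / x) (Set.Icc (N : ℝ) ((N : ℝ) + N)) := by
      apply Real.log_div_self_antitoneOn.mono
      intro x hx
      simp only [Set.mem_Ici]
      exact le_trans hNe hx.1
    have hconv : ∑ n ∈ Finset.Icc (N + 1) (2 * N), Real.log n / n
        = ∑ i ∈ Finset.range N, Real.log ((N : ℝ) + ((i : ℕ) + 1 : ℕ)) / ((N : ℝ) + ((i : ℕ) + 1 : ℕ)) := by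
      rw [← Finset.Ico_add_one_right_eq_Icc, Finset.sum_Ico_eq_sum_range]
      rw [show 2 * N + 1 - (N + 1) = N by omega]
      apply Finset.sum_congr rfl
      intro i _
      norm_num
      ring_nf
    have hub := hanti.sum_le_integral
    have hlb := hanti.integral_le_sum
    have hI : ∫ x in (N : ℝ)..((N : ℝ) + (N : ℕ)), Real.log x / x
        = Real.log ((N : ℝ) + N) ^ 2 / 2 - Real.log N ^ 2 / 2 := by
      rw [aux_integral_log_div _ _ hN0 (by linarith)]
    have hT : ∑ i ∈ Finset.range N, Real.log ((N : ℝ) + (i : ℕ)) / ((N : ℝ) + (i : ℕ))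
        = Real.log N / N - Real.log ((N : ℝ) + N) / ((N : ℝ) + N)
          + ∑ i ∈ Finset.range N, Real.log ((N : ℝ) + ((i : ℕ) + 1 : ℕ)) / ((N : ℝ) + ((i : ℕ) + 1 : ℕ)) := by
      have hs := Finset.sum_range_succ
        (fun i : ℕ => Real.log ((N : ℝ) + (i : ℕ)) / ((N : ℝ) + (i : ℕ))) N
      have hs' := Finset.sum_range_succ'
        (fun i : ℕ => Real.log ((N : ℝ) + (i : ℕ)) / ((N : ℝ) + (i : ℕ))) N
      simp only [Nat.cast_zero, add_zero, Nat.cast_add, Nat.cast_one] at hs hs' ⊢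
      linarith
    have hlog2 : Real.log ((N : ℝ) + N) = Real.log 2 + Real.log N := by
      rw [show ((N : ℝ) + N) = 2 * N by ring, Real.log_mul (by norm_num) hN0.ne']
    have hexp : Real.log ((N : ℝ) + N) ^ 2 / 2 - Real.log N ^ 2 / 2
        = Real.log 2 ^ 2 / 2 + Real.log 2 * Real.log N := by
      rw [hlog2]; ring
    rw [hconv]
    rw [hI, hT] at hlb
    rw [hI] at hub
    linarith [hub, hlb, hexp]
  }

open Filter Finset in
theorem alternating_log_sum :
    Tendsto (fun N : ℕ => ∑ n ∈ Finset.Icc 1 N, (-1 : ℝ) ^ (n + 1) * Real.log n / n)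
      atTop
      (nhds (1 / 2 * Real.log 2 ^ 2 - Real.eulerMascheroniConstant * Real.log 2)) := by
  have hH : Tendsto (fun N : ℕ => (∑ n ∈ Finset.Icc 1 N, ((n : ℝ))⁻¹) - Real.log N)
      atTop (nhds Real.eulerMascheroniConstant) := by
    apply Real.tendsto_harmonic_sub_log.congr
    intro N
    congr 1
    rw [harmonic_eq_sum_Icc]
    push_cast
    rfl
  have heven : Tendsto (fun N : ℕ => ∑ n ∈ Finset.Icc 1 (2 * N), (-1 : ℝ) ^ (n + 1) * Real.log n / n)
      atTop (nhds (1 / 2 * Real.log 2 ^ 2 - Real.eulerMascheroniConstant * Real.log 2)) := by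
    have h := aux_middle.sub (hH.const_mul (Real.log 2))
    rw [show Real.log 2 ^ 2 / 2 - Real.log 2 * Real.eulerMascheroniConstant
        = 1 / 2 * Real.log 2 ^ 2 - Real.eulerMascheroniConstant * Real.log 2 by ring] at h
    apply h.congr
    intro N
    rw [aux_key_identity N]
    ring
  apply aux_tendsto_of_even_odd heven
  have hterm : Tendsto (fun N : ℕ => Real.log ((2 * N + 1 : ℕ) : ℝ) / ((2 * N + 1 : ℕ) : ℝ))
      atTop (nhds 0) := by
    apply aux_logdiv_tendsto_zero.comp
    apply tendsto_natCast_atTop_atTop.comp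
    apply tendsto_atTop_mono (fun n : ℕ => by omega : ∀ n : ℕ, n ≤ 2 * n + 1) tendsto_id
  have h := heven.add hterm
  rw [add_zero] at h
  apply h.congr
  intro N
  rw [Finset.sum_Icc_succ_top (show 1 ≤ 2 * N + 1 by omega),
    show (-1 : ℝ) ^ (2 * N + 1 + 1) = 1 by
      rw [show 2 * N + 1 + 1 = 2 * (N + 1) by ring, pow_mul]; norm_num]
  ring
end

section
/- The derivative of the Riemann zeta function at 0 equals -(1/2) log(2π). -/
open Complex

noncomputable def zetaAux (s : ℂ) : ℂ :=
  (completedRiemannZeta₀ s * s - 1 - s / (1 - s)) / 2 *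
    ((Real.pi : ℂ) ^ (s / 2) * (Complex.Gamma (s / 2 + 1))⁻¹)

lemma zetaAux_eq {s : ℂ} (h1 : ‖s‖ < 1) (h0 : s ≠ 0) : riemannZeta s = zetaAux s := by
  have hs1 : (1 : ℂ) - s ≠ 0 := by
    intro h
    rw [sub_eq_zero] at h
    rw [← h] at h1
    simp at h1
  have hGne : Complex.Gamma (s / 2) ≠ 0 := by
    refine Complex.Gamma_ne_zero fun m => ?_
    rcases Nat.eq_zero_or_pos m with hm | hm
    · simp [hm, div_eq_zero_iff, h0]
    · intro h
      have : ‖s / 2‖ < 1 := by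
        rw [norm_div]
        simp only [norm_ofNat]
        linarith [norm_nonneg s]
      rw [h] at this
      simp only [norm_neg, norm_natCast] at this
      exact absurd this (by exact_mod_cast Nat.not_lt.mpr hm)
  have hrec : Complex.Gamma (s / 2 + 1) = s / 2 * Complex.Gamma (s / 2) :=
    Complex.Gamma_add_one _ (by simpa [div_eq_zero_iff] using h0)
  have hpi : (Real.pi : ℂ) ≠ 0 := by exact_mod_cast Real.pi_ne_zero
  have hcpow : (Real.pi : ℂ) ^ (s / 2) * (Real.pi : ℂ) ^ (-s / 2) = 1 := by
    rw [← Complex.cpow_add _ _ hpi]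
    ring_nf
    exact Complex.cpow_zero _
  rw [riemannZeta_def_of_ne_zero h0, completedRiemannZeta_eq, Gammaℝ_def, zetaAux, hrec]
  have hpow : (Real.pi : ℂ) ^ (-s / 2) ≠ 0 := by
    intro h
    apply hpi
    simpa [h] using hcpow
  field_simp
  rw [neg_div] at hcpow
  linear_combination (-((completedRiemannZeta₀ s * s - 1) * (1 - s) - s)) * hcpow

lemma zetaAux_zero : zetaAux 0 = -1 / 2 := by
  simp [zetaAux, Complex.Gamma_one]

lemma zeta_eventuallyEq : riemannZeta =ᶠ[nhds (0 : ℂ)] zetaAux := by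
  have h : ∀ᶠ s : ℂ in nhds 0, ‖s‖ < 1 := by
    have := Metric.ball_mem_nhds (0 : ℂ) one_pos
    filter_upwards [this] with s hs
    simpa [Complex.dist_eq] using hs
  filter_upwards [h] with s hs
  rcases eq_or_ne s 0 with rfl | h0
  · rw [riemannZeta_zero, zetaAux_zero]
  · exact zetaAux_eq hs h0

open Real in
lemma hasDerivAt_zetaAux : HasDerivAt zetaAux
    ((completedRiemannZeta₀ 0 - 1) / 2 +
      (-1 / 2) * (Complex.log Real.pi / 2 + (eulerMascheroniConstant : ℂ) / 2)) 0 := by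
  have hA : HasDerivAt (fun s : ℂ => (completedRiemannZeta₀ s * s - 1 - s / (1 - s)) / 2)
      ((completedRiemannZeta₀ 0 - 1) / 2) 0 := by
    have h1 : HasDerivAt (fun s : ℂ => completedRiemannZeta₀ s * s) (completedRiemannZeta₀ 0) 0 := by
      exact ((differentiable_completedZeta₀ 0).hasDerivAt.mul (hasDerivAt_id 0)).congr_deriv (by simp)
    have h2 : HasDerivAt (fun s : ℂ => s / (1 - s)) 1 0 := by
      have := (hasDerivAt_id (0 : ℂ)).div ((hasDerivAt_const (0 : ℂ) 1).sub (hasDerivAt_id 0))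
        (by norm_num)
      exact this.congr_deriv (by simp)
    simpa [sub_div] using ((h1.sub_const 1).sub h2).div_const 2
  have hB1 : HasDerivAt (fun s : ℂ => (Real.pi : ℂ) ^ (s / 2)) (Complex.log Real.pi / 2) 0 := by
    have := ((hasDerivAt_id (0 : ℂ)).div_const 2).const_cpow (c := (Real.pi : ℂ))
      (Or.inl (by exact_mod_cast Real.pi_ne_zero))
    exact this.congr_deriv (by simp; ring)
  have hB2 : HasDerivAt (fun s : ℂ => (Complex.Gamma (s / 2 + 1))⁻¹)
      ((eulerMascheroniConstant : ℂ) / 2) 0 := by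
    have hGinv : HasDerivAt (fun z : ℂ => (Complex.Gamma z)⁻¹) (eulerMascheroniConstant : ℂ) 1 := by
      have := Complex.hasDerivAt_Gamma_one.inv (by simp [Complex.Gamma_one])
      exact this.congr_deriv (by simp [Complex.Gamma_one])
    have hf : HasDerivAt (fun s : ℂ => s / 2 + 1) (1 / 2) 0 := by
      simpa using ((hasDerivAt_id (0 : ℂ)).div_const 2).add_const 1
    have hGinv' : HasDerivAt (fun z : ℂ => (Complex.Gamma z)⁻¹)
        (eulerMascheroniConstant : ℂ) ((0 : ℂ) / 2 + 1) := by
      norm_num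
      exact hGinv
    have h := hGinv'.comp 0 hf
    exact h.congr_deriv (by ring)
  have hB : HasDerivAt (fun s : ℂ => (Real.pi : ℂ) ^ (s / 2) * (Complex.Gamma (s / 2 + 1))⁻¹)
      (Complex.log Real.pi / 2 + (eulerMascheroniConstant : ℂ) / 2) 0 := by
    have := hB1.mul hB2
    exact this.congr_deriv (by simp [Complex.Gamma_one])
  have := hA.mul hB
  exact this.congr_deriv (by simp [Complex.Gamma_one])

theorem zeta_deriv_zero :
    deriv riemannZeta 0 = -(1 / 2) * Real.log (2 * Real.pi) := by
  have h0 : completedRiemannZeta₀ 0 =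
      ((Real.eulerMascheroniConstant : ℂ) - Complex.log (4 * Real.pi)) / 2 + 1 := by
    have := completedRiemannZeta₀_one_sub 1
    rw [sub_self] at this
    rw [this, completedRiemannZeta₀_one]
  rw [zeta_eventuallyEq.deriv_eq, hasDerivAt_zetaAux.deriv, h0]
  have hl4 : Complex.log (4 * Real.pi) = (Real.log (4 * Real.pi) : ℂ) := by
    have h : (4 * (Real.pi : ℂ)) = ((4 * Real.pi : ℝ) : ℂ) := by push_cast; ring
    rw [h, ← Complex.ofReal_log (by positivity)]
  have hlp : Complex.log Real.pi = (Real.log Real.pi : ℂ) :=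
    (Complex.ofReal_log Real.pi_pos.le).symm
  rw [hl4, hlp]
  have key : -(Real.log (4 * Real.pi)) / 4 - Real.log Real.pi / 4 =
      -(1 / 2) * Real.log (2 * Real.pi) := by
    have h1 : Real.log (4 * Real.pi) = Real.log 4 + Real.log Real.pi :=
      Real.log_mul (by norm_num) Real.pi_ne_zero
    have h2 : Real.log (2 * Real.pi) = Real.log 2 + Real.log Real.pi :=
      Real.log_mul (by norm_num) Real.pi_ne_zero
    have h4 : Real.log 4 = 2 * Real.log 2 := by
      rw [show (4 : ℝ) = 2 ^ 2 by norm_num, Real.log_pow]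
      push_cast
      ring
    rw [h1, h2, h4]
    ring
  calc ((((Real.eulerMascheroniConstant : ℂ) - (Real.log (4 * Real.pi) : ℂ)) / 2 + 1) - 1) / 2 +
      (-1 / 2) * ((Real.log Real.pi : ℂ) / 2 + (Real.eulerMascheroniConstant : ℂ) / 2)
      = ((-(Real.log (4 * Real.pi)) / 4 - Real.log Real.pi / 4 : ℝ) : ℂ) := by
        push_cast
        ring
    _ = -(1 / 2) * Real.log (2 * Real.pi) := by
        rw [key]
        push_cast
        ring
end
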